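/- Touchard–Riordan formula: c(2n, 0, q) = (1/(1−q)^n)·Σ_{j=−n}^{n} C(2n, n+j)·(−1)^j·q^{C(j,2)}, where c(n,k,q) is defined by the recurrence c(0,k,q) = δ_{k,0}, c(n,0,q) = c(n−1,1,q), c(n,k,q) = c(n−1,k−1,q) + [k+1]_q·c(n−1,k+1,q) for k ≥ 1. -/

import Mathlib

noncomputable section

abbrev Kq : Type := RatFunc ℚ
def q : Kq := RatFunc.X
/-- The q-integer `[m]_q = 1 + q + ⋯ + q^{m−1}`. -/
def qInt (n : ℕ) : Kq := ∑ i ∈ Finset.range n, q ^ i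

lemma q_pow_ne_one (m : ℕ) (hm : 1 ≤ m) : q ^ m ≠ 1 := by
  intro h
  have : (Polynomial.X : Polynomial ℚ) ^ m = 1 := by
    apply RatFunc.algebraMap_injective ℚ
    rw [map_pow, map_one, RatFunc.algebraMap_X]
    exact h
  have := congrArg Polynomial.natDegree this
  simp [Polynomial.natDegree_X_pow] at this
  omega

lemma one_sub_q_pow_ne_zero (m : ℕ) (hm : 1 ≤ m) : (1 : Kq) - q ^ m ≠ 0 := by
  intro h
  exact q_pow_ne_one m hm (by linear_combination -h)

lemma one_sub_q_ne_zero : (1 : Kq) - q ≠ 0 := by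
  simpa using one_sub_q_pow_ne_zero 1 le_rfl

lemma qInt_succ (m : ℕ) : qInt (m + 1) = qInt m + q ^ m := by
  simp only [qInt, geom_sum_succ' (x := q) (n := m)]; ring

lemma gq (m : ℕ) : (1 - q) * qInt m = 1 - q ^ m := by
  have := geom_sum_mul (x := q) (n := m)
  simp only [qInt]
  linear_combination -this

/-- Gaussian binomial coefficient. -/
def qb : ℕ → ℕ → Kq
  | _, 0 => 1
  | 0, _ + 1 => 0
  | n + 1, k + 1 => qb n k + q ^ (k + 1) * qb n (k + 1)

lemma qb_zero (n : ℕ) : qb n 0 = 1 := by cases n <;> rfl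

lemma qb_succ (n k : ℕ) : qb (n + 1) (k + 1) = qb n k + q ^ (k + 1) * qb n (k + 1) := rfl

lemma qb_of_lt : ∀ n k : ℕ, n < k → qb n k = 0 := by
  intro n
  induction n with
  | zero => intro k hk; match k, hk with | k + 1, _ => rfl
  | succ n ih =>
    intro k hk
    match k, hk with
    | k + 1, hk =>
      rw [qb_succ, ih k (by omega), ih (k+1) (by omega)]
      ring

lemma qb_self : ∀ n : ℕ, qb n n = 1 := by
  intro n
  induction n with
  | zero => rfl
  | succ n ih => rw [qb_succ, ih, qb_of_lt n (n + 1) (by omega)]; ring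

lemma qb_one (n : ℕ) : qb n 1 = qInt n := by
  induction n with
  | zero => simp [qb, qInt]
  | succ n ih =>
    rw [qb_succ, qb_zero, ih]
    have := geom_sum_succ (x := q) (n := n)
    simp only [qInt] at *
    linear_combination -this


lemma qb_succ_self : ∀ n : ℕ, qb (n + 1) n = qInt (n + 1) := by
  intro n
  induction n with
  | zero => simp [qb_zero, qInt]
  | succ n ih =>
    rw [qb_succ, ih, qb_self]
    linear_combination -(qInt_succ (n+1))

lemma pascal1 : ∀ n k : ℕ, k ≤ n → qb (n + 1) (k + 1) = qb n (k + 1) + q ^ (n - k) * qb n k := by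
  intro n
  induction n with
  | zero =>
    intro k hk
    interval_cases k
    simp [qb_succ, qb_zero, qb_of_lt 0 1 (by omega)]
  | succ n ih =>
    intro k hk
    match k, hk with
    | 0, _ =>
      simp only [Nat.zero_add, Nat.sub_zero]
      rw [qb_succ, qb_zero, qb_one]
      have a := qInt_succ (n + 1)
      have b := geom_sum_succ (x := q) (n := n + 1)
      simp only [qInt] at *
      linear_combination a - b
    | k + 1, hk =>
      rcases Nat.lt_or_ge k n with h | h
      · -- k + 1 ≤ n
        obtain ⟨d, rfl⟩ : ∃ d, n = k + 1 + d := ⟨n - (k + 1), by omega⟩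
        set n := k + 1 + d with hn
        have d1 : qb (n + 2) (k + 2) = qb (n + 1) (k + 1) + q ^ (k + 2) * qb (n + 1) (k + 2) :=
          qb_succ _ _
        have d2 : qb (n + 1) (k + 2) = qb n (k + 1) + q ^ (k + 2) * qb n (k + 2) := qb_succ _ _
        have d3 : qb (n + 1) (k + 1) = qb n k + q ^ (k + 1) * qb n (k + 1) := qb_succ _ _
        have i1 : qb (n + 1) (k + 1) = qb n (k + 1) + q ^ (d + 1) * qb n k := by
          have := ih k (by omega); rwa [show n - k = d + 1 by omega] at this
        have i2 : qb (n + 1) (k + 2) = qb n (k + 2) + q ^ d * qb n (k + 1) := by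
          have := ih (k + 1) (by omega); rwa [show n - (k + 1) = d by omega] at this
        rw [show n + 1 + 1 = n + 2 by omega, show n + 1 - (k + 1) = d + 1 by omega]
        linear_combination d1 + i1 - q ^ (d + 1) * d3 + q ^ (k + 2) * i2 - d2
      · -- k = n
        have hk' : k = n := by omega
        subst hk'
        rw [qb_self, qb_of_lt (k + 1) (k + 2) (by omega), qb_succ, qb_self,
            qb_of_lt k (k + 1) (by omega)]
        simp

lemma qbR (n k : ℕ) (h : k ≤ n) :
    (1 - q ^ (n - k)) * qb n k = (1 - q ^ (k + 1)) * qb n (k + 1) := by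
  have h1 := qb_succ n k
  have h2 := pascal1 n k h
  linear_combination h2 - h1

/-- `sA k j` : the polynomial `qb (k+j) j + q^(k+j) * qb (k+j-1) (j-1)`. -/
def sA : ℕ → ℕ → Kq
  | _, 0 => 1
  | k, i + 1 => qb (k + i + 1) (i + 1) + q ^ (k + i + 1) * qb (k + i) i

def Acoef (k j : ℕ) : Kq := q ^ (j.choose 2) * sA k j

lemma Acoef_zero (k : ℕ) : Acoef k 0 = 1 := by simp [Acoef, sA]

lemma sA_one (k : ℕ) : sA k 1 = qInt (k + 2) := by
  show qb (k + 0 + 1) (0 + 1) + q ^ (k + 0 + 1) * qb (k + 0) 0 = _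
  simp only [Nat.add_zero, Nat.zero_add, qb_zero, qb_one]
  rw [qInt_succ (k + 1)]
  ring

lemma sA_zero_succ (i : ℕ) : sA 0 (i + 1) = 1 + q ^ (i + 1) := by
  show qb (0 + i + 1) (i + 1) + q ^ (0 + i + 1) * qb (0 + i) i = _
  simp only [Nat.zero_add, qb_self]
  ring

lemma sA_one_succ (i : ℕ) : sA 1 (i + 1) = qInt (i + 2) + q ^ (i + 2) * qInt (i + 1) := by
  show qb (1 + i + 1) (i + 1) + q ^ (1 + i + 1) * qb (1 + i) i = _
  rw [show 1 + i + 1 = (i + 1) + 1 by omega, show 1 + i = i + 1 by omega,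
    qb_succ_self, qb_succ_self]

lemma key_core (b0 b1 b2 c1 c2 X Y : Kq)
    (R1 : (1 - X) * b1 = (1 - q * Y) * b0)
    (R2 : (1 - q * X) * b2 = (1 - Y) * b1)
    (E1 : b1 = c2 + Y * c1) :
    Y * ((b1 + q * Y * b0) + q * X * Y * b1) + (1 - q * X) * ((b2 + Y * b1) + q * X * Y * b2)
      = Y * (b0 + X * Y * c1) + (b1 + X * Y * c2) := by
  linear_combination Y * R1 + (1 + q * X * Y) * R2 + X * Y * E1

lemma key (k i : ℕ) :
    q ^ i * sA (k + 1) (i + 1) + (1 - q ^ (k + 2)) * sA (k + 2) i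
      = q ^ i * sA k (i + 1) + sA (k + 1) i := by
  cases i with
  | zero =>
    show q ^ 0 * sA (k + 1) 1 + (1 - q ^ (k + 2)) * sA (k + 2) 0 = q ^ 0 * sA k 1 + sA (k + 1) 0
    rw [sA_one, sA_one, show sA (k + 2) 0 = 1 from rfl, show sA (k + 1) 0 = 1 from rfl,
        show k + 1 + 2 = (k + 2) + 1 by omega, qInt_succ]
    ring
  | succ t =>
    have R1 := qbR (k + t + 2) (t + 1) (by omega)
    rw [show k + t + 2 - (t + 1) = k + 1 by omega] at R1
    have R2 := qbR (k + t + 2) t (by omega)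
    rw [show k + t + 2 - t = k + 2 by omega] at R2
    have E1 : qb (k + t + 2) (t + 1) = qb (k + t + 1) t + q ^ (t + 1) * qb (k + t + 1) (t + 1) :=
      qb_succ _ _
    have p1 : q ^ (k + t + 3) = q * (q ^ (k + 1) * q ^ (t + 1)) := by
      rw [← pow_add]; rw [show k + t + 3 = ((k + 1) + (t + 1)) + 1 by omega, pow_succ]; ring
    have p2 : q ^ (k + t + 2) = q ^ (k + 1) * q ^ (t + 1) := by
      rw [← pow_add]; congr 1; omega
    have p3 : q ^ (t + 2) = q * q ^ (t + 1) := by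
      rw [show t + 2 = (t + 1) + 1 by omega, pow_succ]; ring
    have p4 : q ^ (k + 2) = q * q ^ (k + 1) := by
      rw [show k + 2 = (k + 1) + 1 by omega, pow_succ]; ring
    have KC := key_core (qb (k + t + 2) (t + 2)) (qb (k + t + 2) (t + 1)) (qb (k + t + 2) t)
      (qb (k + t + 1) (t + 1)) (qb (k + t + 1) t) (q ^ (k + 1)) (q ^ (t + 1))
      (by linear_combination R1 - qb (k + t + 2) (t + 2) * p3)
      (by linear_combination R2 - qb (k + t + 2) t * p4)
      (by linear_combination E1)
    show q ^ (t + 1) * sA (k + 1) (t + 1 + 1) + (1 - q ^ (k + 2)) * sA (k + 2) (t + 1)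
      = q ^ (t + 1) * sA k (t + 1 + 1) + sA (k + 1) (t + 1)
    simp only [sA]
    rw [show t + 1 + 1 = t + 2 by omega,
        show k + 1 + (t + 1) + 1 = k + t + 3 by omega, show k + 1 + (t + 1) = k + t + 2 by omega,
        show k + 2 + t + 1 = k + t + 3 by omega, show k + 2 + t = k + t + 2 by omega,
        show k + (t + 1) + 1 = k + t + 2 by omega, show k + (t + 1) = k + t + 1 by omega,
        show k + 1 + t + 1 = k + t + 2 by omega, show k + 1 + t = k + t + 1 by omega]
    have D1 : qb (k + t + 3) (t + 2)
        = qb (k + t + 2) (t + 1) + q ^ (t + 2) * qb (k + t + 2) (t + 2) := qb_succ _ _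
    have D2 : qb (k + t + 3) (t + 1)
        = qb (k + t + 2) t + q ^ (t + 1) * qb (k + t + 2) (t + 1) := qb_succ _ _
    rw [D1, D2, p1, p3, p4]
    linear_combination KC


lemma choose2_succ (s : ℕ) : (s + 1).choose 2 = s.choose 2 + s := by
  have := Nat.choose_succ_succ s 1
  norm_num [Nat.choose_one_right] at this
  omega

lemma star' (k i : ℕ) :
    Acoef (k + 1) (i + 1) + (1 - q ^ (k + 2)) * Acoef (k + 2) i
      = Acoef k (i + 1) + Acoef (k + 1) i := by
  unfold Acoef
  rw [choose2_succ i, pow_add]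
  linear_combination q ^ (i.choose 2) * key k i

lemma Acoef_zero_succ (i : ℕ) : Acoef 0 (i + 1) = q ^ ((i + 1).choose 2) * (1 + q ^ (i + 1)) := by
  rw [Acoef, sA_zero_succ]

lemma Acoef_one_succ (i : ℕ) :
    Acoef 1 (i + 1) = q ^ ((i + 1).choose 2) * (qInt (i + 2) + q ^ (i + 2) * qInt (i + 1)) := by
  rw [Acoef, sA_one_succ]

lemma A0_step (i : ℕ) : Acoef 0 (i + 1) - Acoef 0 (i + 2) = (1 - q) * Acoef 1 (i + 1) := by
  rw [Acoef_zero_succ, Acoef_zero_succ, Acoef_one_succ,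
      show i + 2 = (i + 1) + 1 by omega, choose2_succ (i + 1), pow_add]
  have g1 := gq (i + 1)
  have g2 := gq (i + 2)
  have p1 : q ^ (i + 2) = q ^ (i + 1) * q := by rw [← pow_succ]
  linear_combination (-(q ^ ((i + 1).choose 2))) * g2 - q ^ ((i + 1).choose 2) * q ^ (i + 2) * g1
    + (q ^ ((i + 1).choose 2) * (1 - q) * qInt (i + 1) - q ^ ((i+1).choose 2) * (1 + q ^ (i + 2))) * p1

lemma Acoef_zero_one : Acoef 0 1 = 1 + q := by
  rw [show (1:ℕ) = 0 + 1 from rfl, Acoef_zero_succ]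
  norm_num

lemma Acoef_one_zero : Acoef 1 0 = 1 := Acoef_zero 1

/-- ℤ-indexed binomial coefficient (0 for negative index), as element of `Kq`. -/
def ch (n : ℕ) (z : ℤ) : Kq := if 0 ≤ z then ((n.choose z.toNat : ℕ) : Kq) else 0

lemma ch_pascal (n : ℕ) (z : ℤ) : ch (n + 1) z = ch n z + ch n (z - 1) := by
  rcases lt_trichotomy z 0 with h | h | h
  · simp [ch, not_le.2 h, not_le.2 (by omega : z - 1 < 0)]
    intro h'; exact absurd h' (by omega)
  · subst h; simp [ch]
  · obtain ⟨s, rfl⟩ : ∃ s : ℕ, z = (s : ℤ) + 1 := ⟨(z - 1).toNat, by omega⟩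
    have h1 : ((s : ℤ) + 1).toNat = s + 1 := by omega
    have h2 : ((s : ℤ) + 1 - 1).toNat = s := by omega
    simp only [ch, if_pos (by omega : (0:ℤ) ≤ (s:ℤ) + 1), if_pos (by omega : (0:ℤ) ≤ (s:ℤ) + 1 - 1),
      h1, h2]
    rw [Nat.choose_succ_succ]
    push_cast
    ring

lemma ch_ofNat (n m : ℕ) : ch n (m : ℤ) = (n.choose m : Kq) := by
  simp [ch]

lemma ch_zero (n : ℕ) : ch n 0 = 1 := by simp [ch]


lemma sum_pascal (n m : ℕ) (f : ℕ → Kq) :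
    ∑ j ∈ Finset.range (m + 1), f j * ch (n + 1) ((m : ℤ) - j)
      = (∑ j ∈ Finset.range (m + 1), f j * ch n ((m : ℤ) - j))
        + ∑ j ∈ Finset.range m, f j * ch n ((m : ℤ) - 1 - j) := by
  have h1 : ∀ j ∈ Finset.range (m + 1),
      f j * ch (n + 1) ((m : ℤ) - j) = f j * ch n ((m : ℤ) - j) + f j * ch n ((m : ℤ) - j - 1) :=
    fun j _ => by rw [ch_pascal]; ring
  rw [Finset.sum_congr rfl h1, Finset.sum_add_distrib]
  congr 1
  rw [Finset.sum_range_succ]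
  have h2 : ch n ((m : ℤ) - m - 1) = 0 := by
    have : (m : ℤ) - m - 1 = -1 := by ring
    rw [this]; simp [ch]
  rw [h2, mul_zero, add_zero]
  exact Finset.sum_congr rfl fun j _ => by rw [show (m : ℤ) - j - 1 = (m : ℤ) - 1 - j by ring]

lemma c_lt (c : ℕ → ℕ → Kq) (h0 : ∀ k, c 0 k = if k = 0 then 1 else 0)
    (hrec : ∀ n k, c (n + 1) (k + 1) = c n k + qInt (k + 2) * c n (k + 2)) :
    ∀ n k, n < k → c n k = 0 := by
  intro n
  induction n with
  | zero =>
    intro k hk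
    rw [h0, if_neg (by omega)]
  | succ n ihn =>
    intro k hk
    match k, hk with
    | k + 1, hk =>
      rw [hrec, ihn k (by omega), ihn (k + 2) (by omega)]
      ring

lemma c_diag (c : ℕ → ℕ → Kq) (h0 : ∀ k, c 0 k = if k = 0 then 1 else 0)
    (hrec : ∀ n k, c (n + 1) (k + 1) = c n k + qInt (k + 2) * c n (k + 2)) :
    ∀ n, c n n = 1 := by
  intro n
  induction n with
  | zero => rw [h0, if_pos rfl]
  | succ n ihn =>
    rw [hrec, ihn, c_lt c h0 hrec n (n + 2) (by omega)]
    ring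

lemma main_formula (c : ℕ → ℕ → Kq) (h0 : ∀ k, c 0 k = if k = 0 then 1 else 0)
    (hz : ∀ n, c (n + 1) 0 = c n 1)
    (hrec : ∀ n k, c (n + 1) (k + 1) = c n k + qInt (k + 2) * c n (k + 2)) :
    ∀ n k m : ℕ, n = k + 2 * m →
      (1 - q) ^ m * c n k
        = ∑ j ∈ Finset.range (m + 1), (-1 : Kq) ^ j * Acoef k j * ch n ((m : ℤ) - j) := by
  intro n
  induction n with
  | zero =>
    intro k m hkm
    have hk : k = 0 := by omega
    have hm : m = 0 := by omega
    subst hk; subst hm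
    rw [h0, if_pos rfl]
    simp [Acoef_zero, ch_zero]
  | succ n ih =>
    intro k m hkm
    cases k with
    | zero =>
      obtain ⟨m', rfl⟩ : ∃ m', m = m' + 1 := ⟨m - 1, by omega⟩
      have hn : n = 1 + 2 * m' := by omega
      have IH := ih 1 m' hn
      rw [hz n, show ((1 : Kq) - q) ^ (m' + 1) * c n 1
          = (1 - q) * ((1 - q) ^ m' * c n 1) by ring, IH, Finset.mul_sum]
      rw [sum_pascal n (m' + 1) (fun j => (-1 : Kq) ^ j * Acoef 0 j)]
      rw [Finset.sum_range_succ'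
        (fun j => (-1 : Kq) ^ j * Acoef 0 j * ch n (((m' + 1 : ℕ) : ℤ) - j)) (m' + 1)]
      have e1 : ∀ i : ℕ, (((m' + 1 : ℕ) : ℤ) - (i + 1 : ℕ)) = (m' : ℤ) - i := by
        intro i; push_cast; ring
      have e2 : ∀ i : ℕ, (((m' + 1 : ℕ) : ℤ) - 1 - (i : ℕ)) = (m' : ℤ) - i := by
        intro i; push_cast; ring
      simp only [e1, e2, Nat.cast_zero, sub_zero, pow_zero, one_mul, Acoef_zero]
      -- goal now:
      --   ∑ j ∈ range (m'+1), (1-q) * ((-1)^j * Acoef 1 j * ch n (↑m' - j))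
      -- = (∑ i ∈ range (m'+1), (-1)^(i+1) * Acoef 0 (i+1) * ch n (↑m' - i)
      --     + ch n ↑(m'+1))
      --   + ∑ j ∈ range (m'+1), (-1)^j * Acoef 0 j * ch n (↑m' - j)
      have hch : ch n (((m' + 1 : ℕ) : ℤ)) = ch n ((m' : ℤ)) := by
        have h1 : ((m' + 1 : ℕ) : ℤ) = ((m' + 1 : ℕ) : ℤ) := rfl
        rw [ch_ofNat, ch_ofNat]
        have : n.choose (m' + 1) = n.choose m' := by
          have := Nat.choose_symm (n := n) (k := m' + 1) (by omega)
          rw [show n - (m' + 1) = m' by omega] at this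
          omega
        rw [this]
      rw [hch]
      rw [Finset.sum_range_succ'
        (fun j => (1 - q) * ((-1 : Kq) ^ j * Acoef 1 j * ch n ((m' : ℤ) - j))) m']
      rw [Finset.sum_range_succ'
        (fun i => (-1 : Kq) ^ (i + 1) * Acoef 0 (i + 1) * ch n ((m' : ℤ) - i)) m']
      rw [Finset.sum_range_succ'
        (fun j => (-1 : Kq) ^ j * Acoef 0 j * ch n ((m' : ℤ) - j)) m']
      have eterm : ∀ i ∈ Finset.range m',
          (1 - q) * ((-1 : Kq) ^ (i + 1) * Acoef 1 (i + 1) * ch n ((m' : ℤ) - (i + 1 : ℕ)))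
            = ((-1 : Kq) ^ (i + 1 + 1) * Acoef 0 (i + 1 + 1) * ch n ((m' : ℤ) - (i + 1 : ℕ)))
              + ((-1 : Kq) ^ (i + 1) * Acoef 0 (i + 1) * ch n ((m' : ℤ) - (i + 1 : ℕ))) := by
        intro i _
        have h3 := A0_step i
        rw [show i + 2 = i + 1 + 1 from rfl] at h3
        linear_combination ((-1 : Kq) ^ i * ch n ((m' : ℤ) - (i + 1 : ℕ))) * h3
      rw [Finset.sum_congr rfl eterm, Finset.sum_add_distrib]
      norm_num [Acoef_zero_one, Acoef_one_zero, Acoef_zero]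
      ring
    | succ k' =>
      cases m with
      | zero =>
        have hn : n = k' := by omega
        subst hn
        rw [hrec, c_diag c h0 hrec, c_lt c h0 hrec n (n + 2) (by omega)]
        simp [Acoef_zero, ch_zero]
      | succ m'' =>
        have hn1 : n = k' + 2 * (m'' + 1) := by omega
        have hn2 : n = (k' + 2) + 2 * m'' := by omega
        have IH1 := ih k' (m'' + 1) hn1
        have IH2 := ih (k' + 2) m'' hn2
        have hg := gq (k' + 2)
        rw [hrec n k']
        have expand : ((1 : Kq) - q) ^ (m'' + 1) * (c n k' + qInt (k' + 2) * c n (k' + 2))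
            = (1 - q) ^ (m'' + 1) * c n k'
              + ((1 - q) * qInt (k' + 2)) * ((1 - q) ^ m'' * c n (k' + 2)) := by ring
        rw [expand, hg, IH1, IH2]
        rw [sum_pascal n (m'' + 1) (fun j => (-1 : Kq) ^ j * Acoef (k' + 1) j)]
        have e2 : ∀ i : ℕ, (((m'' + 1 : ℕ) : ℤ) - 1 - (i : ℕ)) = (m'' : ℤ) - i := by
          intro i; push_cast; ring
        have e1 : ∀ i : ℕ, (((m'' + 1 : ℕ) : ℤ) - ((i + 1 : ℕ) : ℤ)) = (m'' : ℤ) - i := by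
          intro i; push_cast; ring
        simp only [e2]
        rw [Finset.sum_range_succ'
          (fun j => (-1 : Kq) ^ j * Acoef (k' + 1) j * ch n (((m'' + 1 : ℕ) : ℤ) - j)) (m'' + 1)]
        rw [Finset.sum_range_succ'
          (fun j => (-1 : Kq) ^ j * Acoef k' j * ch n (((m'' + 1 : ℕ) : ℤ) - j)) (m'' + 1)]
        simp only [e1, Nat.cast_zero, sub_zero, pow_zero, one_mul, Acoef_zero]
        -- LHS : (∑ i ∈ range (m''+1), (-1)^(i+1) * Acoef k' (i+1) * ch n (↑m'' - i)) + ch n ↑(m''+1)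
        --       + (1 - q^(k'+2)) * ∑ j ∈ range (m''+1), (-1)^j * Acoef (k'+2) j * ch n (↑m'' - j)
        -- RHS : ((∑ i ∈ range (m''+1), (-1)^(i+1) * Acoef (k'+1) (i+1) * ch n (↑m'' - i)) + ch n ↑(m''+1))
        --       + ∑ j ∈ range (m''+1), (-1)^j * Acoef (k'+1) j * ch n (↑m'' - j)
        rw [Finset.mul_sum]
        have eterm : ∀ i ∈ Finset.range (m'' + 1),
            ((-1 : Kq) ^ (i + 1) * Acoef (k' + 1) (i + 1) * ch n ((m'' : ℤ) - i))
              + ((-1 : Kq) ^ i * Acoef (k' + 1) i * ch n ((m'' : ℤ) - i))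
            = ((-1 : Kq) ^ (i + 1) * Acoef k' (i + 1) * ch n ((m'' : ℤ) - i))
              + (1 - q ^ (k' + 2)) * ((-1 : Kq) ^ i * Acoef (k' + 2) i * ch n ((m'' : ℤ) - i)) := by
          intro i _
          have hstar := star' k' i
          linear_combination ((-1 : Kq) ^ (i + 1) * ch n ((m'' : ℤ) - i)) * hstar
        have bigsum :
            ∑ i ∈ Finset.range (m'' + 1),
              (((-1 : Kq) ^ (i + 1) * Acoef (k' + 1) (i + 1) * ch n ((m'' : ℤ) - i))
                + ((-1 : Kq) ^ i * Acoef (k' + 1) i * ch n ((m'' : ℤ) - i)))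
            = ∑ i ∈ Finset.range (m'' + 1),
              (((-1 : Kq) ^ (i + 1) * Acoef k' (i + 1) * ch n ((m'' : ℤ) - i))
                + (1 - q ^ (k' + 2)) * ((-1 : Kq) ^ i * Acoef (k' + 2) i * ch n ((m'' : ℤ) - i))) :=
          Finset.sum_congr rfl eterm
        rw [Finset.sum_add_distrib, Finset.sum_add_distrib] at bigsum
        linear_combination -bigsum


lemma tri_neg (t : ℕ) : ((-(t:ℤ)) * (-(t:ℤ) - 1) / 2).toNat = (t+1).choose 2 := by
  have h2 : (t+1).choose 2 * 2 = (t+1) * t := by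
    rw [Nat.choose_two_right]
    simp only [Nat.add_sub_cancel]
    exact Nat.div_mul_cancel (by simpa [Nat.mul_comm] using Nat.even_mul_succ_self t |>.two_dvd)
  have hP : (-(t:ℤ)) * (-(t:ℤ) - 1) = (((t+1) * t : ℕ) : ℤ) := by push_cast; ring
  rw [hP]
  omega

lemma tri_pos (s : ℕ) : ((((s+1:ℕ)):ℤ) * ((((s+1:ℕ)):ℤ) - 1) / 2).toNat = (s+1).choose 2 := by
  have h2 : (s+1).choose 2 * 2 = (s+1) * s := by
    rw [Nat.choose_two_right]
    simp only [Nat.add_sub_cancel]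
    exact Nat.div_mul_cancel (by simpa [Nat.mul_comm] using Nat.even_mul_succ_self s |>.two_dvd)
  have hP : (((s+1:ℕ)):ℤ) * ((((s+1:ℕ)):ℤ) - 1) = (((s+1) * s : ℕ) : ℤ) := by push_cast; ring
  rw [hP]
  omega

lemma neg_one_zpow_neg_natCast (t : ℕ) : ((-1 : Kq) ^ (-(t:ℤ))) = (-1:Kq)^t := by
  rw [zpow_neg, zpow_natCast, ← inv_pow, inv_neg, inv_one]

lemma final_sum (N : ℕ) :
    ∑ j ∈ Finset.Icc (-(N : ℤ)) (N : ℤ),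
        ((2 * N).choose ((N : ℤ) + j).toNat : Kq) * (-1) ^ j * q ^ ((j * (j - 1) / 2).toNat)
      = ∑ j ∈ Finset.range (N + 1), (-1 : Kq) ^ j * Acoef 0 j * ch (2 * N) ((N : ℤ) - j) := by
  have hsplit : Finset.Icc (-(N : ℤ)) (N : ℤ)
      = Finset.Icc (-(N : ℤ)) 0 ∪ Finset.Icc 1 (N : ℤ) := by
    ext x; simp only [Finset.mem_Icc, Finset.mem_union]; omega
  have hdisj : Disjoint (Finset.Icc (-(N : ℤ)) 0) (Finset.Icc 1 (N : ℤ)) := by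
    rw [Finset.disjoint_left]; intro a ha hb
    simp only [Finset.mem_Icc] at ha hb; omega
  rw [hsplit, Finset.sum_union hdisj]
  -- negative part
  have hneg : ∑ j ∈ Finset.Icc (-(N : ℤ)) 0,
      ((2 * N).choose ((N : ℤ) + j).toNat : Kq) * (-1) ^ j * q ^ ((j * (j - 1) / 2).toNat)
      = ∑ t ∈ Finset.range (N + 1),
          ((2 * N).choose (N - t) : Kq) * (-1 : Kq) ^ t * q ^ ((t + 1).choose 2) := by
    apply Finset.sum_nbij' (i := fun (j : ℤ) => (-j).toNat) (j := fun (t : ℕ) => -(t : ℤ))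
    · intro a ha; simp only [Finset.mem_Icc] at ha; simp only [Finset.mem_range]; omega
    · intro a ha; simp only [Finset.mem_range] at ha; simp only [Finset.mem_Icc]; omega
    · intro a ha; simp only [Finset.mem_Icc] at ha; omega
    · intro a ha; simp only [Finset.mem_range] at ha; omega
    · intro a ha
      simp only [Finset.mem_Icc] at ha
      obtain ⟨t, rfl⟩ : ∃ t : ℕ, a = -(t : ℤ) := ⟨(-a).toNat, by omega⟩
      have e1 : ((N : ℤ) + -(t : ℤ)).toNat = N - t := by omega
      have e2 : (-(-(t : ℤ))).toNat = t := by omega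
      rw [e1, e2, tri_neg, neg_one_zpow_neg_natCast]
  -- positive part
  have hpos : ∑ j ∈ Finset.Icc 1 (N : ℤ),
      ((2 * N).choose ((N : ℤ) + j).toNat : Kq) * (-1) ^ j * q ^ ((j * (j - 1) / 2).toNat)
      = ∑ s ∈ Finset.range N,
          ((2 * N).choose (N - (s + 1)) : Kq) * (-1 : Kq) ^ (s + 1) * q ^ ((s + 1).choose 2) := by
    apply Finset.sum_nbij' (i := fun (j : ℤ) => (j - 1).toNat) (j := fun (s : ℕ) => ((s : ℤ) + 1))
    · intro a ha; simp only [Finset.mem_Icc] at ha; simp only [Finset.mem_range]; omega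
    · intro a ha; simp only [Finset.mem_range] at ha; simp only [Finset.mem_Icc]; omega
    · intro a ha; simp only [Finset.mem_Icc] at ha; omega
    · intro a ha; simp only [Finset.mem_range] at ha; omega
    · intro a ha
      simp only [Finset.mem_Icc] at ha
      obtain ⟨s, rfl⟩ : ∃ s : ℕ, a = (s : ℤ) + 1 := ⟨(a - 1).toNat, by omega⟩
      have e0 : ((s : ℤ) + 1 - 1).toNat = s := by omega
      have e1 : ((N : ℤ) + ((s : ℤ) + 1)).toNat = N + (s + 1) := by omega
      have e2 : (2 * N).choose (N + (s + 1)) = (2 * N).choose (N - (s + 1)) := by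
        rcases le_or_gt (s + 1) N with h | h
        · have := Nat.choose_symm (n := 2 * N) (k := N + (s + 1)) (by omega)
          rw [show 2 * N - (N + (s + 1)) = N - (s + 1) by omega] at this
          exact this.symm
        · rw [Nat.choose_eq_zero_of_lt (by omega), show N - (s + 1) = 0 by omega]
          omega
      have e3 : ((s : ℤ) + 1) * ((s : ℤ) + 1 - 1) / 2 = ((((s+1:ℕ)):ℤ) * ((((s+1:ℕ)):ℤ) - 1) / 2) := by
        push_cast; ring_nf
      have e4 : (-1 : Kq) ^ ((s : ℤ) + 1) = (-1 : Kq) ^ (s + 1) := by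
        rw [show (s : ℤ) + 1 = ((s + 1 : ℕ) : ℤ) by push_cast; ring, zpow_natCast]
      rw [e0, e1, e2, e3, tri_pos, e4]
  rw [hneg, hpos]
  -- RHS: peel j = 0
  rw [Finset.sum_range_succ'
    (fun j => (-1 : Kq) ^ j * Acoef 0 j * ch (2 * N) ((N : ℤ) - j)) N]
  rw [Finset.sum_range_succ'
    (fun t => ((2 * N).choose (N - t) : Kq) * (-1 : Kq) ^ t * q ^ ((t + 1).choose 2)) N]
  have hch : ∀ i : ℕ, i < N → ch (2 * N) ((N : ℤ) - ((i + 1 : ℕ) : ℤ))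
      = ((2 * N).choose (N - (i + 1)) : Kq) := by
    intro i hi
    rw [show (N : ℤ) - ((i + 1 : ℕ) : ℤ) = ((N - (i + 1) : ℕ) : ℤ) by omega, ch_ofNat]
  have hchN : ch (2 * N) ((N : ℤ) - 0) = ((2 * N).choose N : Kq) := by
    rw [show (N : ℤ) - 0 = ((N : ℕ) : ℤ) by omega, ch_ofNat]
  have expand : ∀ i ∈ Finset.range N,
      (-1 : Kq) ^ (i + 1) * Acoef 0 (i + 1) * ch (2 * N) ((N : ℤ) - ((i + 1 : ℕ) : ℤ))
        = ((2 * N).choose (N - (i + 1)) : Kq) * (-1 : Kq) ^ (i + 1) * q ^ ((i + 1).choose 2)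
          + ((2 * N).choose (N - (i + 1)) : Kq) * (-1 : Kq) ^ (i + 1) * q ^ ((i + 1 + 1).choose 2) := by
    intro i hi
    rw [hch i (Finset.mem_range.mp hi), Acoef_zero_succ]
    rw [show (i + 1 + 1).choose 2 = (i + 1).choose 2 + (i + 1) from choose2_succ (i + 1), pow_add]
    ring
  rw [Finset.sum_congr rfl expand, Finset.sum_add_distrib]
  simp only [Acoef_zero, Nat.cast_zero, Nat.sub_zero, pow_zero, one_mul, hchN]
  -- remaining: match the two (i+1).choose-2-shifted sums and constants
  have hone : ((0 : ℕ) + 1).choose 2 = 0 := rfl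
  rw [hone]
  ring

/-- Touchard–Riordan formula:
`c(2n,0,q) = (1/(1−q)^n) · Σ_{j=−n}^{n} C(2n,n+j)·(−1)^j·q^{j(j−1)/2}`,
where `c(0,k,q) = δ_{k,0}`, `c(n,0,q) = c(n−1,1,q)` and
`c(n,k,q) = c(n−1,k−1,q) + [k+1]_q·c(n−1,k+1,q)` for `k ≥ 1`. -/
theorem touchard_riordan (c : ℕ → ℕ → Kq)
    (h0 : ∀ k, c 0 k = if k = 0 then 1 else 0)
    (hz : ∀ n, c (n + 1) 0 = c n 1)
    (hrec : ∀ n k, c (n + 1) (k + 1) = c n k + qInt (k + 2) * c n (k + 2)) :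
    ∀ n : ℕ,
      c (2 * n) 0 =
        (1 / (1 - q) ^ n) *
          ∑ j ∈ Finset.Icc (-(n : ℤ)) (n : ℤ),
            ((2 * n).choose ((n : ℤ) + j).toNat : Kq) * (-1) ^ j *
              q ^ ((j * (j - 1) / 2).toNat) := by
  intro n
  have M := main_formula c h0 hz hrec (2 * n) 0 n (by ring)
  rw [← final_sum n] at M
  rw [← M]
  have hne : ((1 : Kq) - q) ^ n ≠ 0 := pow_ne_zero _ one_sub_q_ne_zero
  field_simp

end
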